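/- Assume (F0), (F1) and (F2). Then the topological entropy of the restriction of G to its maximal invariant set Λ_G equals log 3. -/

import Mathlib

open Set Filter MeasureTheory

noncomputable section

/-- Condition (F0) on the fiber map `f₀`. -/
def F0cond (f₀ : ℝ → ℝ) (β₀ lam₀ : ℝ) : Prop :=
  ContDiff ℝ 1 f₀ ∧ Set.MapsTo f₀ (Set.Icc 0 1) (Set.Icc 0 1) ∧
  StrictMonoOn f₀ (Set.Icc 0 1) ∧ f₀ 0 = 0 ∧ f₀ 1 = 1 ∧
  (∀ x ∈ Set.Ioo (0:ℝ) 1, x < f₀ x) ∧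
  deriv f₀ 0 = β₀ ∧ 1 < β₀ ∧ deriv f₀ 1 = lam₀ ∧ 0 < lam₀ ∧ lam₀ < 1 ∧
  (∀ x ∈ Set.Icc (0:ℝ) 1, lam₀ ≤ deriv f₀ x)

/-- Condition (F1) on the fiber map `f₁`. -/
def F1cond (f₁ : ℝ → ℝ) (γ lam₀ : ℝ) : Prop :=
  (∀ x, f₁ x = γ * (1 - x)) ∧ lam₀ ≤ γ ∧ γ < 1

/-- Condition (F2) on the fiber map `f₂`. -/
def F2cond (f₂ : ℝ → ℝ) (β₂ lam₀ : ℝ) : Prop :=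
  ContDiff ℝ 1 f₂ ∧ Set.MapsTo f₂ (Set.Icc 0 1) (Set.Icc 0 1) ∧
  StrictMonoOn f₂ (Set.Icc 0 1) ∧ f₂ 0 = 0 ∧
  deriv f₂ 0 = β₂ ∧ 1 < β₂ ∧ (∀ x ∈ Set.Icc (0:ℝ) 1, lam₀ ≤ deriv f₂ x) ∧
  ∃ p₂, p₂ ∈ Set.Ioo (0:ℝ) 1 ∧ f₂ p₂ = p₂ ∧ (∀ x ∈ Set.Ioo 0 p₂, x < f₂ x) ∧
    (∀ x ∈ Set.Ioc p₂ 1, f₂ x < x)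

/-- Condition (F01). -/
def F01cond (f₀ : ℝ → ℝ) (β₀ lam₀ γ : ℝ) : Prop :=
  AntitoneOn (deriv f₀) (Set.Icc 0 1) ∧
  1 < γ * (lam₀ ^ 3 * (1 - lam₀) / (1 - β₀⁻¹))

/-- Condition (F012), with `H = [0,δ]`, `H' = [1-γ⁻¹δ,1]`, and the derived constants
`β' = βpr`, `β_H = βH`, `λ' = lampr`, `L`. -/
def F012cond (f₀ f₁ f₂ : ℝ → ℝ) (γ lam₀ β₀ β₂ δ βpr βH lampr : ℝ) (L : ℕ) : Prop :=
  (∀ x ∈ Set.Icc (0:ℝ) 1, deriv f₀ x ≤ max β₀ β₂ ∧ deriv f₂ x ≤ max β₀ β₂) ∧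
  0 < δ ∧ δ < γ ∧
  (f₁ '' Set.Icc 0 δ) ∩ Set.Icc 0 δ = ∅ ∧
  (f₁ '' Set.Icc (1 - γ⁻¹ * δ) 1) ∩ Set.Icc (1 - γ⁻¹ * δ) 1 = ∅ ∧
  (f₁ '' Set.Icc 0 1) ∩ Set.Icc (1 - γ⁻¹ * δ) 1 = ∅ ∧
  (f₂ '' Set.Icc 0 1) ∩ Set.Icc (1 - γ⁻¹ * δ) 1 = ∅ ∧
  IsGreatest {y | ∃ x ∈ Set.Icc δ 1, y = max (deriv f₀ x) (deriv f₂ x)} βpr ∧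
  1 < βpr ∧ βpr < min β₀ β₂ ∧
  IsLeast {y | ∃ x ∈ Set.Icc (0:ℝ) δ, y = min (deriv f₀ x) (deriv f₂ x)} βH ∧
  1 < βH ∧ βH < min β₀ β₂ ∧
  IsGreatest {y | ∃ x ∈ Set.Icc (1 - γ⁻¹ * δ) 1, y = deriv f₀ x} lampr ∧
  lampr < 1 ∧
  |Real.log lam₀| * Real.log (max β₀ β₂) / Real.log βH - |Real.log lampr|
      + (2 / 3) * Real.log (max β₀ β₂) < (3 / 4) * Real.log βpr ∧
  1 ≤ L ∧
  4 * |Real.log lam₀| * Real.log (max β₀ β₂) / (Real.log βH * Real.log βpr) < (L : ℝ) ∧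
  Real.log ((max β₀ β₂) ^ L * γ) / ((L : ℝ) + 1) < Real.log βpr

/-- `f_{ξ_{n-1}} ∘ ⋯ ∘ f_{ξ₀}`. -/
def seqComp (fs : Fin 3 → ℝ → ℝ) (ξ : ℕ → Fin 3) : ℕ → ℝ → ℝ
  | 0 => id
  | n + 1 => fun x => fs (ξ n) (seqComp fs ξ n x)

/-- The upper Lyapunov exponent of the point `p` under the itinerary `ξ`. -/
def lyapUpper (fs : Fin 3 → ℝ → ℝ) (p : ℝ) (ξ : ℕ → Fin 3) : ℝ :=
  Filter.limsup (fun n : ℕ => (1 / (n : ℝ)) * Real.log |deriv (seqComp fs ξ n) p|) Filter.atTop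

/-- Membership in the exceptional set `E`. -/
def exceptional (fs : Fin 3 → ℝ → ℝ) (p : ℝ) (ξ : ℕ → Fin 3) : Prop :=
  ∃ m : ℕ, seqComp fs ξ m p = 0 ∧ ∀ j, m ≤ j → (ξ j = 0 ∨ ξ j = 2)

/-- `f_[w] = f_{w_{m-1}} ∘ ⋯ ∘ f_{w₀}` for a finite word `w`. -/
def wordComp {α : Type*} (fs : α → ℝ → ℝ) (w : List α) : ℝ → ℝ :=
  fun x => w.foldl (fun y i => fs i y) x

/-- The two-sided sequence space `Σ₃`. -/
instance : UniformSpace (Fin 3) := ⊥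

abbrev Sig3 := ℤ → Fin 3

/-- The state space `Σ₃ × [0,1]`. -/
abbrev XSp := Sig3 × (Set.Icc (0:ℝ) 1)

instance : UniformSpace (Fin 3) := ⊥

/-- The left shift on `Σ₃`. -/
def shiftMap (ξ : Sig3) : Sig3 := fun i => ξ (i + 1)

/-- The step skew product `G(ξ,x) = (σξ, f_{ξ₀}(x))` on `Σ₃ × [0,1]`. -/
def Gmap (fs : Fin 3 → ℝ → ℝ) : XSp → XSp :=
  fun p => (shiftMap p.1, Set.projIcc 0 1 (by norm_num) (fs (p.1 0) (p.2 : ℝ)))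

/-- The maximal invariant set `Λ_G = ⋂ₙ Gⁿ(Σ₃ × [0,1])`. -/
def LamG (fs : Fin 3 → ℝ → ℝ) : Set XSp := ⋂ n : ℕ, (Gmap fs)^[n] '' Set.univ

/-- The lateral horseshoe `Λ₀₂`. -/
def Lam02 : Set XSp := {p | (∀ i, p.1 i ≠ 1) ∧ (p.2 : ℝ) = 0}

/-- The central derivative potential `φ(ξ,x) = log|f_{ξ₀}'(x)|`. -/
def phiC (fs : Fin 3 → ℝ → ℝ) (p : XSp) : ℝ := Real.log |deriv (fs (p.1 0)) (p.2 : ℝ)|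

/-- The central Lyapunov exponent `χ(μ) = ∫ φ dμ` of a measure. -/
def chiOf (fs : Fin 3 → ℝ → ℝ) (μ : Measure XSp) : ℝ := ∫ p, phiC fs p ∂μ

/-- `ν` is the `(p 0, p 1, p 2)`-Bernoulli measure on `Σ₃`. -/
def IsBernoulli (p : Fin 3 → ℝ) (ν : Measure Sig3) : Prop :=
  IsProbabilityMeasure ν ∧ ∀ (s : Finset ℤ) (a : ℤ → Fin 3),
    ν {ξ | ∀ i ∈ s, ξ i = a i} = ENNReal.ofReal (∏ i ∈ s, p (a i))


section Aux
open Dynamics UniformSpace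

abbrev II := ↥(Set.Icc (0:ℝ) 1)

def stepI (fs : Fin 3 → ℝ → ℝ) (i : Fin 3) (x : II) : II :=
  Set.projIcc 0 1 (by norm_num) (fs i (x : ℝ))

def orbitI (fs : Fin 3 → ℝ → ℝ) (ξ : Sig3) : ℕ → II → II
  | 0 => id
  | k + 1 => fun x => stepI fs (ξ k) (orbitI fs ξ k x)

lemma Gmap_eq (fs : Fin 3 → ℝ → ℝ) (p : XSp) :
    Gmap fs p = (shiftMap p.1, stepI fs (p.1 0) p.2) := rfl

lemma shiftMap_iterate (ξ : Sig3) (k : ℕ) :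
    shiftMap^[k] ξ = fun i => ξ (i + k) := by
  induction k with
  | zero => simp
  | succ k ih =>
      rw [Function.iterate_succ_apply', ih]
      funext i
      simp only [shiftMap]
      congr 1
      push_cast
      ring

lemma orbitI_shift (fs : Fin 3 → ℝ → ℝ) (ξ : Sig3) (k : ℕ) (x : II) :
    orbitI fs (shiftMap ξ) k (stepI fs (ξ 0) x) = orbitI fs ξ (k + 1) x := by
  induction k with
  | zero => rfl
  | succ k ih =>
      show stepI fs (shiftMap ξ k) _ = _
      rw [ih]
      show _ = stepI fs (ξ ((k:ℤ)+1)) (orbitI fs ξ (k+1) x)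
      simp only [shiftMap]

lemma Gmap_iterate (fs : Fin 3 → ℝ → ℝ) (ξ : Sig3) (x : II) (k : ℕ) :
    (Gmap fs)^[k] (ξ, x) = (shiftMap^[k] ξ, orbitI fs ξ k x) := by
  induction k generalizing ξ x with
  | zero => rfl
  | succ k ih =>
      rw [Function.iterate_succ_apply, Gmap_eq, ih, ← orbitI_shift]
      rfl

lemma orbitI_congr (fs : Fin 3 → ℝ → ℝ) {ξ η : Sig3} {k : ℕ}
    (h : ∀ j : ℕ, j < k → ξ j = η j) : orbitI fs ξ k = orbitI fs η k := by
  induction k with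
  | zero => rfl
  | succ k ih =>
      funext x
      show stepI fs (ξ k) (orbitI fs ξ k x) = stepI fs (η k) (orbitI fs η k x)
      rw [ih (fun j hj => h j (by omega)), h k (by omega)]

end Aux
section Aux2
open Dynamics UniformSpace

def GoodFib (fs : Fin 3 → ℝ → ℝ) : Prop :=
  ∀ i, Continuous (fs i) ∧
    (MonotoneOn (fs i) (Set.Icc 0 1) ∨ AntitoneOn (fs i) (Set.Icc 0 1))

lemma goodFib_of_conds {f₀ f₁ f₂ : ℝ → ℝ} {β₀ lam₀ γ β₂ : ℝ}
    (h0 : F0cond f₀ β₀ lam₀) (h1 : F1cond f₁ γ lam₀) (h2 : F2cond f₂ β₂ lam₀) :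
    GoodFib ![f₀, f₁, f₂] := by
  have hγ : 0 ≤ γ := le_trans h0.2.2.2.2.2.2.2.2.2.1.le h1.2.1
  have hf1 : f₁ = fun x => γ * (1 - x) := funext h1.1
  intro i
  fin_cases i <;>
    simp only [Matrix.cons_val_zero, Matrix.cons_val_one, Matrix.head_cons, Fin.mk_one,
      Matrix.cons_val_two, Matrix.tail_cons, Fin.isValue]
  · exact ⟨h0.1.continuous, Or.inl (h0.2.2.1.monotoneOn)⟩
  · constructor
    · rw [hf1]; continuity
    · refine Or.inr fun x _ y _ hxy => ?_
      rw [h1.1 x, h1.1 y]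
      nlinarith
  · exact ⟨h2.1.continuous, Or.inl (h2.2.2.1.monotoneOn)⟩

lemma stepI_continuous {fs : Fin 3 → ℝ → ℝ} (h : GoodFib fs) (i : Fin 3) :
    Continuous (stepI fs i) :=
  continuous_projIcc.comp ((h i).1.comp continuous_subtype_val)

lemma stepI_monoanti {fs : Fin 3 → ℝ → ℝ} (h : GoodFib fs) (i : Fin 3) :
    Monotone (stepI fs i) ∨ Antitone (stepI fs i) := by
  rcases (h i).2 with hm | hm
  · exact Or.inl fun x y hxy => monotone_projIcc _ (hm x.2 y.2 hxy)
  · exact Or.inr fun x y hxy => monotone_projIcc _ (hm x.2 y.2 hxy)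

lemma orbitI_continuous {fs : Fin 3 → ℝ → ℝ} (h : GoodFib fs) (ξ : Sig3) (k : ℕ) :
    Continuous (orbitI fs ξ k) := by
  induction k with
  | zero => exact continuous_id
  | succ k ih => exact (stepI_continuous h (ξ k)).comp ih

lemma orbitI_monoanti {fs : Fin 3 → ℝ → ℝ} (h : GoodFib fs) (ξ : Sig3) (k : ℕ) :
    Monotone (orbitI fs ξ k) ∨ Antitone (orbitI fs ξ k) := by
  induction k with
  | zero => exact Or.inl monotone_id
  | succ k ih =>
      have : orbitI fs ξ (k+1) = stepI fs (ξ k) ∘ orbitI fs ξ k := rfl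
      rw [this]
      rcases stepI_monoanti h (ξ (k : ℕ) : Fin 3) with hs | hs <;>
        rcases ih with ho | ho
      · exact Or.inl (hs.comp ho)
      · exact Or.inr (hs.comp_antitone ho)
      · exact Or.inr (hs.comp_monotone ho)
      · exact Or.inl (hs.comp ho)

lemma Gmap_continuous {fs : Fin 3 → ℝ → ℝ} (h : GoodFib fs) :
    Continuous (Gmap fs) := by
  have h1 : Continuous (fun p : XSp => shiftMap p.1) := by
    refine continuous_pi fun i => ?_
    exact (continuous_apply (i + 1)).comp continuous_fst
  refine continuous_prodMk.2 ⟨h1, ?_⟩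
  rw [continuous_iff_continuousAt]
  intro p
  have hopen : IsOpen {q : XSp | q.1 0 = p.1 0} := by
    have hc : Continuous (fun q : XSp => q.1 0) := (continuous_apply 0).comp continuous_fst
    have h2 := hc.isOpen_preimage ({p.1 0} : Set (Fin 3)) (isOpen_discrete ({p.1 0} : Set (Fin 3)))
    have h3 : {q : XSp | q.1 0 = p.1 0} = (fun q : XSp => q.1 0) ⁻¹' ({p.1 0} : Set (Fin 3)) := rfl
    rw [h3]
    exact h2
  have hev : (fun q : XSp => stepI fs (q.1 0) q.2)
      =ᶠ[nhds p] (fun q : XSp => stepI fs (p.1 0) q.2) := by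
    filter_upwards [hopen.mem_nhds (rfl : p.1 0 = p.1 0)] with q hq
    rw [hq]
  refine ContinuousAt.congr ?_ hev.symm
  exact ((stepI_continuous h (p.1 0)).comp continuous_snd).continuousAt

end Aux2
section Aux3
open Dynamics UniformSpace

lemma fst_image_LamG {fs : Fin 3 → ℝ → ℝ} (h : GoodFib fs) :
    Prod.fst '' LamG fs = (Set.univ : Set Sig3) := by
  refine Set.eq_univ_of_forall fun ξ => ?_
  set C : ℕ → Set II := fun n => {x : II | (ξ, x) ∈ (Gmap fs)^[n] '' Set.univ} with hC
  have hne : ∀ n, (C n).Nonempty := by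
    intro n
    set η : Sig3 := fun i => ξ (i - n) with hη
    set z : II := ⟨0, by norm_num⟩ with hz
    refine ⟨orbitI fs η n z, ⟨(η, z), Set.mem_univ _, ?_⟩⟩
    rw [Gmap_iterate, shiftMap_iterate]
    refine Prod.ext ?_ rfl
    funext i
    show ξ (i + n - n) = ξ i
    congr 1
    ring
  have hclosed : ∀ n, IsClosed (C n) := by
    intro n
    have hcomp : IsCompact ((Gmap fs)^[n] '' Set.univ) :=
      isCompact_univ.image ((Gmap_continuous h).iterate n)
    exact hcomp.isClosed.preimage (Continuous.prodMk_right ξ)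
  have hanti : ∀ n, C (n + 1) ⊆ C n := by
    intro n x hx
    have : (Gmap fs)^[n+1] '' Set.univ ⊆ (Gmap fs)^[n] '' Set.univ := by
      rw [Function.iterate_succ]
      rw [Set.image_comp]
      exact Set.image_mono (Set.subset_univ _)
    exact this hx
  obtain ⟨x, hx⟩ := IsCompact.nonempty_iInter_of_sequence_nonempty_isCompact_isClosed C hanti hne
    ((hclosed 0).isCompact) hclosed
  refine ⟨(ξ, x), ?_, rfl⟩
  rw [LamG, Set.mem_iInter]
  exact fun n => Set.mem_iInter.1 hx n

end Aux3
section Aux4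
open Dynamics UniformSpace Filter Uniformity

def V0 : Set (Sig3 × Sig3) := {ab | ab.1 0 = ab.2 0}

lemma V0_mem : V0 ∈ 𝓤 Sig3 := by
  have h1 : 𝓤 Sig3 = ⨅ i : ℤ, Filter.comap (fun ab : Sig3 × Sig3 => (ab.1 i, ab.2 i))
      (𝓤 (Fin 3)) := Pi.uniformity _
  rw [h1]
  refine Filter.mem_iInf_of_mem 0 ?_
  rw [Filter.mem_comap]
  refine ⟨SetRel.id, by rw [bot_uniformity]; exact Filter.mem_principal_self _, ?_⟩
  intro ab hab
  simpa [V0, SetRel.id] using hab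

lemma V0_symm : Prod.swap ⁻¹' V0 = V0 := by
  ext ab
  simp only [Set.mem_preimage, V0, Set.mem_setOf_eq, Prod.fst_swap, Prod.snd_swap]
  exact eq_comm

/-- words over `Fin n` embed into covers -/
lemma mincard_shift_ge (n : ℕ) :
    (3 ^ n : ℕ∞) ≤ coverMincard shiftMap Set.univ V0 n := by
  refine le_iInf₂ fun s hs => ?_
  classical
  -- for each word, a sequence
  set ext : (Fin n → Fin 3) → Sig3 := fun w i =>
    if h : 0 ≤ i ∧ i < n then w ⟨i.toNat, by omega⟩ else 0 with hext
  have hextval : ∀ (w : Fin n → Fin 3) (k : Fin n), ext w (k : ℤ) = w k := by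
    intro w k
    have h : (0 ≤ (k : ℤ)) ∧ ((k : ℤ) < n) := by
      constructor
      · positivity
      · exact_mod_cast k.2
    rw [hext]
    simp only [h, and_self, dif_pos]
    apply congrArg w
    apply Fin.ext
    simp
  have hcov : ∀ w : Fin n → Fin 3, ∃ c ∈ s, ∀ k : Fin n, c (k : ℤ) = w k := by
    intro w
    have := hs (Set.mem_univ (ext w))
    obtain ⟨c, hc, hball⟩ := this
    refine ⟨c, hc, fun k => ?_⟩
    rw [mem_dynEntourage] at hball
    have hk := hball k k.2
    rw [shiftMap_iterate, shiftMap_iterate] at hk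
    have : c ((0 : ℤ) + k) = ext w ((0:ℤ) + k) := hk.symm
    simpa [hextval w k] using this
  choose c hcs hcval using hcov
  have hinj : Function.Injective fun w : Fin n → Fin 3 => (⟨c w, hcs w⟩ : {x // x ∈ s}) := by
    intro w w' hww
    funext k
    have : c w = c w' := congrArg Subtype.val hww
    rw [← hcval w k, ← hcval w' k, this]
  have hcard := Fintype.card_le_of_injective _ hinj
  rw [Fintype.card_coe] at hcard
  simp only [Fintype.card_fun, Fintype.card_fin] at hcard
  exact_mod_cast hcard

lemma log3_le_entE :
    (Real.log 3 : EReal) ≤ coverEntropyEntourage shiftMap Set.univ V0 := by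
  rw [coverEntropyEntourage]
  refine le_limsup_of_frequently_le ?_
  refine (Filter.eventually_atTop.2 ⟨1, fun n hn => ?_⟩).frequently
  have h1 : ENNReal.log ((3 ^ n : ℕ∞) : ENNReal) ≤
      ENNReal.log ((coverMincard shiftMap Set.univ V0 n : ℕ∞) : ENNReal) :=
    ENNReal.log_monotone (ENat.toENNReal_mono (mincard_shift_ge n))
  have h2 : ((3 ^ n : ℕ∞) : ENNReal) = (3 : ENNReal) ^ n := by
    push_cast
    norm_num
  rw [h2, ENNReal.log_pow] at h1
  have h3 : ENNReal.log (3 : ENNReal) = (Real.log 3 : EReal) := by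
    rw [ENNReal.log_pos_real' (by norm_num)]
    norm_num
  rw [h3] at h1
  calc (Real.log 3 : EReal) = ((n : EReal) * (Real.log 3 : EReal)) / (n : EReal) := by
        have hne : ((n:ℝ) : EReal) ≠ 0 := by
          simp only [ne_eq, EReal.coe_eq_zero]
          positivity
        have : ((n : ℝ) : EReal) = (n : EReal) := by norm_cast
        rw [← this, ← EReal.coe_mul, ← EReal.coe_div, mul_comm,
          mul_div_assoc, div_self (by positivity : (n:ℝ) ≠ 0), mul_one]
    _ ≤ _ := by
        exact EReal.monotone_div_right_of_nonneg (Nat.cast_nonneg' n) h1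

end Aux4
section Aux5
open Dynamics UniformSpace Filter Uniformity

lemma lower_bound {fs : Fin 3 → ℝ → ℝ} (h : GoodFib fs) :
    (Real.log 3 : EReal) ≤ coverEntropy (Gmap fs) (LamG fs) := by
  have hsemi : Function.Semiconj Prod.fst (Gmap fs) shiftMap := fun p => rfl
  have himg := Dynamics.coverEntropyEntourage_image_le hsemi (LamG fs) V0
  rw [fst_image_LamG h] at himg
  have hmem : (Prod.map Prod.fst Prod.fst) ⁻¹' V0 ∈ 𝓤 XSp :=
    (uniformContinuous_fst : UniformContinuous (Prod.fst : XSp → Sig3)) V0_mem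
  calc (Real.log 3 : EReal) ≤ coverEntropyEntourage shiftMap Set.univ V0 := log3_le_entE
    _ ≤ coverEntropyEntourage (Gmap fs) (LamG fs) ((Prod.map Prod.fst Prod.fst) ⁻¹' V0) := himg
    _ ≤ coverEntropy (Gmap fs) (LamG fs) :=
        coverEntropyEntourage_le_coverEntropy _ _ hmem

end Aux5
section Aux6
open Dynamics UniformSpace Filter Uniformity

lemma fiber_net {fs : Fin 3 → ℝ → ℝ} (h : GoodFib fs) (ξ : Sig3) (n : ℕ) {ε : ℝ}
    (hε : 0 < ε) :
    ∃ t : Finset II, t.card ≤ ⌊(n:ℝ)/ε⌋₊ + 1 ∧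
      ∀ x : II, ∃ y ∈ t, ∀ k, k < n →
        |(orbitI fs ξ k x : ℝ) - (orbitI fs ξ k y : ℝ)| < ε := by
  classical
  set z : II := ⟨0, by norm_num⟩ with hzdef
  set one : II := ⟨1, by norm_num⟩ with honedef
  have hz_le : ∀ x : II, z ≤ x := fun x => Subtype.coe_le_coe.1 x.2.1
  have hle_one : ∀ x : II, x ≤ one := fun x => Subtype.coe_le_coe.1 x.2.2
  set T : ℕ → II → ℝ := fun k x => |(orbitI fs ξ k x : ℝ) - (orbitI fs ξ k z : ℝ)| with hTdef
  have hT : ∀ (k : ℕ) (x y : II), x ≤ y →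
      T k y - T k x = |(orbitI fs ξ k y : ℝ) - (orbitI fs ξ k x : ℝ)| := by
    intro k x y hxy
    rcases orbitI_monoanti h ξ k with hm | hm
    · have h1 : (orbitI fs ξ k z : ℝ) ≤ (orbitI fs ξ k x : ℝ) :=
        Subtype.coe_le_coe.2 (hm (hz_le x))
      have h2 : (orbitI fs ξ k x : ℝ) ≤ (orbitI fs ξ k y : ℝ) :=
        Subtype.coe_le_coe.2 (hm hxy)
      have h3 : (orbitI fs ξ k z : ℝ) ≤ (orbitI fs ξ k y : ℝ) := h1.trans h2
      rw [hTdef]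
      simp only
      rw [abs_of_nonneg (by linarith), abs_of_nonneg (by linarith),
        abs_of_nonneg (by linarith)]
      ring
    · have h1 : (orbitI fs ξ k x : ℝ) ≤ (orbitI fs ξ k z : ℝ) :=
        Subtype.coe_le_coe.2 (hm (hz_le x))
      have h2 : (orbitI fs ξ k y : ℝ) ≤ (orbitI fs ξ k x : ℝ) :=
        Subtype.coe_le_coe.2 (hm hxy)
      have h3 : (orbitI fs ξ k y : ℝ) ≤ (orbitI fs ξ k z : ℝ) := h2.trans h1
      rw [hTdef]
      simp only
      rw [abs_of_nonpos (by linarith), abs_of_nonpos (by linarith),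
        abs_of_nonpos (by linarith)]
      ring
  have hTmono : ∀ k : ℕ, Monotone (T k) := by
    intro k x y hxy
    have := hT k x y hxy
    have h2 : (0:ℝ) ≤ |(orbitI fs ξ k y : ℝ) - (orbitI fs ξ k x : ℝ)| := abs_nonneg _
    linarith
  set V : II → ℝ := fun x => ∑ k ∈ Finset.range n, T k x with hVdef
  have hVmono : Monotone V := fun x y hxy =>
    Finset.sum_le_sum fun k _ => hTmono k hxy
  have hVcont : Continuous V := by
    refine continuous_finset_sum _ fun k _ => ?_
    exact (((continuous_subtype_val.comp (orbitI_continuous h ξ k)).sub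
      continuous_const).abs)
  have hVz : V z = 0 := by
    rw [hVdef]
    simp [hTdef]
  have hVnn : ∀ x, 0 ≤ V x := fun x => hVz ▸ hVmono (hz_le x)
  have hV1 : ∀ x, V x ≤ n := by
    intro x
    have : ∀ k ∈ Finset.range n, T k x ≤ 1 := by
      intro k _
      rw [hTdef]
      simp only
      have h1 := (orbitI fs ξ k x).2.1
      have h2 := (orbitI fs ξ k x).2.2
      have h3 := (orbitI fs ξ k z).2.1
      have h4 := (orbitI fs ξ k z).2.2
      rw [abs_le]
      constructor <;> linarith
    calc V x ≤ ∑ _k ∈ Finset.range n, (1:ℝ) := Finset.sum_le_sum this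
      _ = n := by simp
  have hkey : ∀ (x y : II) (k : ℕ), k < n →
      |(orbitI fs ξ k x : ℝ) - (orbitI fs ξ k y : ℝ)| ≤ |V x - V y| := by
    have main : ∀ (x y : II), y ≤ x → ∀ k, k < n →
        |(orbitI fs ξ k x : ℝ) - (orbitI fs ξ k y : ℝ)| ≤ V x - V y := by
      intro x y hyx k hk
      rw [← hT k y x hyx]
      have : ∑ j ∈ Finset.range n, T j y ≤ ∑ j ∈ Finset.range n, T j x :=
        Finset.sum_le_sum fun j _ => hTmono j hyx
      have hsum : T k x - T k y ≤ V x - V y := by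
        rw [hVdef]
        simp only
        rw [← Finset.sum_sub_distrib]
        refine Finset.single_le_sum (f := fun j => T j x - T j y) ?_ (Finset.mem_range.2 hk)
        intro j _
        show (0:ℝ) ≤ T j x - T j y
        have := hTmono j hyx
        linarith
      linarith
    intro x y k hk
    rcases le_total y x with hyx | hxy
    · calc |(orbitI fs ξ k x : ℝ) - (orbitI fs ξ k y : ℝ)| ≤ V x - V y := main x y hyx k hk
        _ ≤ |V x - V y| := le_abs_self _
    · rw [abs_sub_comm, abs_sub_comm (V x)]
      calc |(orbitI fs ξ k y : ℝ) - (orbitI fs ξ k x : ℝ)| ≤ V y - V x := main y x hxy k hk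
        _ ≤ |V y - V x| := le_abs_self _
  -- grid via IVT
  have hivt : ∀ c : ℝ, 0 ≤ c → c ≤ V one → ∃ y : II, V y = c := by
    intro c hc hc'
    set W : ℝ → ℝ := fun r => V (Set.projIcc 0 1 (by norm_num) r) with hWdef
    have hWcont : Continuous W := hVcont.comp continuous_projIcc
    have hW0 : W 0 = V z := by
      rw [hWdef]
      simp only
      congr 1
      apply Subtype.ext
      simp [Set.projIcc]
      rfl
    have hW1 : W 1 = V one := by
      rw [hWdef]
      simp only
      congr 1
      apply Subtype.ext
      simp [Set.projIcc]
      rfl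
    have := intermediate_value_Icc (by norm_num : (0:ℝ) ≤ 1) hWcont.continuousOn
    have hmem : c ∈ Set.Icc (W 0) (W 1) := by rw [hW0, hW1, hVz]; exact ⟨hc, hc'⟩
    obtain ⟨r, _, hr⟩ := this hmem
    exact ⟨Set.projIcc 0 1 (by norm_num) r, hr⟩
  have hch : ∀ j : ℕ, ∃ y : II, ((j:ℝ) * ε ≤ V one → V y = j * ε) := by
    intro j
    by_cases hj : (j:ℝ) * ε ≤ V one
    · obtain ⟨y, hy⟩ := hivt ((j:ℝ)*ε) (by positivity) hj
      exact ⟨y, fun _ => hy⟩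
    · exact ⟨z, fun hc => absurd hc hj⟩
  choose y hy using hch
  refine ⟨(Finset.range (⌊(n:ℝ)/ε⌋₊ + 1)).image y, ?_, ?_⟩
  · calc _ ≤ (Finset.range (⌊(n:ℝ)/ε⌋₊ + 1)).card := Finset.card_image_le
      _ = ⌊(n:ℝ)/ε⌋₊ + 1 := Finset.card_range _
  · intro x
    set c := V x with hcdef
    set j := ⌊c/ε⌋₊ with hjdef
    have hc0 : 0 ≤ c := hVnn x
    have hcε : 0 ≤ c / ε := div_nonneg hc0 hε.le
    have hj1 : (j:ℝ) * ε ≤ c := by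
      have := Nat.floor_le hcε
      calc (j:ℝ) * ε ≤ (c/ε) * ε := by nlinarith
        _ = c := div_mul_cancel₀ c hε.ne'
    have hj2 : c < ((j:ℝ) + 1) * ε := by
      have := Nat.lt_floor_add_one (c/ε)
      calc c = (c/ε) * ε := (div_mul_cancel₀ c hε.ne').symm
        _ < ((j:ℝ) + 1) * ε := by
          apply mul_lt_mul_of_pos_right _ hε
          exact_mod_cast this
    have hcone : c ≤ V one := hVmono (hle_one x)
    have hyj : V (y j) = (j:ℝ) * ε := hy j (hj1.trans hcone)
    have hjmem : j ∈ Finset.range (⌊(n:ℝ)/ε⌋₊ + 1) := by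
      rw [Finset.mem_range, Nat.lt_succ_iff, hjdef]
      apply Nat.floor_mono
      have hcn : c ≤ (n:ℝ) := hV1 x
      gcongr
    refine ⟨y j, Finset.mem_image_of_mem y hjmem, fun k hk => ?_⟩
    calc |(orbitI fs ξ k x : ℝ) - (orbitI fs ξ k (y j) : ℝ)| ≤ |V x - V (y j)| :=
          hkey x (y j) k hk
      _ = |c - (j:ℝ)*ε| := by rw [hyj]
      _ = c - (j:ℝ)*ε := abs_of_nonneg (by linarith)
      _ < ε := by nlinarith

end Aux6
section Aux7
open Dynamics UniformSpace Filter Uniformity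

def WK (K : ℕ) (ε : ℝ) : Set (XSp × XSp) :=
  {pq | (∀ i : ℤ, |i| ≤ (K:ℤ) → pq.1.1 i = pq.2.1 i) ∧
    |(pq.1.2 : ℝ) - (pq.2.2 : ℝ)| < ε}

lemma mincard_le_WK {fs : Fin 3 → ℝ → ℝ} (h : GoodFib fs) (F : Set XSp) (K n : ℕ)
    {ε : ℝ} (hε : 0 < ε) :
    coverMincard (Gmap fs) F (WK K ε) n ≤
      ((3 ^ (n + 2*K + 1) * (⌊(n:ℝ)/ε⌋₊ + 1) : ℕ) : ℕ∞) := by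
  classical
  set D : Finset ℤ := Finset.Icc (-(K:ℤ)) ((n:ℤ)+K) with hD
  have hDcard : D.card = n + 2*K + 1 := by
    rw [hD, Int.card_Icc]
    omega
  set extw : (D → Fin 3) → Sig3 := fun w i => if hi : i ∈ D then w ⟨i, hi⟩ else 0 with hextw
  choose t ht1 ht2 using fun w : (D → Fin 3) => fiber_net h (extw w) n hε
  set s : Finset XSp :=
    Finset.univ.biUnion (fun w : (D → Fin 3) => (t w).image (fun y => (extw w, y))) with hs
  have hcover : IsDynCoverOf (Gmap fs) F (WK K ε) n s := by
    rintro ⟨ξ, x⟩ _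
    set w : (D → Fin 3) := fun j => ξ (j : ℤ) with hw
    have hagree : ∀ i ∈ D, extw w i = ξ i := by
      intro i hi
      rw [hextw]
      simp only [dif_pos hi]
      rfl
    obtain ⟨y, hyt, hy⟩ := ht2 w x
    have hqs : (extw w, y) ∈ s := by
      rw [hs]
      exact Finset.mem_biUnion.2 ⟨w, Finset.mem_univ _,
        Finset.mem_image_of_mem _ hyt⟩
    refine ⟨(extw w, y), hqs, ?_⟩
    rw [mem_dynEntourage]
    intro k hk
    rw [Gmap_iterate, Gmap_iterate]
    constructor
    · intro i hi
      rw [shiftMap_iterate, shiftMap_iterate]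
      have habs := abs_le.1 hi
      have hmem : i + k ∈ D := by
        rw [hD, Finset.mem_Icc]
        constructor <;> [omega; omega]
      exact (hagree (i+k) hmem).symm
    · have horb : orbitI fs (extw w) k = orbitI fs ξ k := by
        refine orbitI_congr fs fun j hj => ?_
        refine hagree (j : ℤ) ?_
        rw [hD, Finset.mem_Icc]
        omega
      show |(orbitI fs ξ k x : ℝ) - (orbitI fs (extw w) k y : ℝ)| < ε
      rw [horb]
      have := hy k hk
      rw [horb] at this
      exact this
  have hcard : s.card ≤ 3 ^ (n + 2*K + 1) * (⌊(n:ℝ)/ε⌋₊ + 1) := by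
    calc s.card ≤ ∑ w : (D → Fin 3), ((t w).image (fun y => (extw w, y))).card :=
          Finset.card_biUnion_le
      _ ≤ ∑ _w : (D → Fin 3), (⌊(n:ℝ)/ε⌋₊ + 1) := by
          refine Finset.sum_le_sum fun w _ => ?_
          exact Finset.card_image_le.trans (ht1 w)
      _ = 3 ^ (n + 2*K + 1) * (⌊(n:ℝ)/ε⌋₊ + 1) := by
          rw [Finset.sum_const, Finset.card_univ]
          congr 1
          simp [Fintype.card_fun, hDcard]
  calc coverMincard (Gmap fs) F (WK K ε) n ≤ (s.card : ℕ∞) :=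
        hcover.coverMincard_le_card
    _ ≤ _ := by exact_mod_cast hcard
end Aux7
section Aux8
open Dynamics UniformSpace Filter Uniformity

lemma log_floor_div_tendsto {ε : ℝ} (hε : 0 < ε) :
    Tendsto (fun n : ℕ => Real.log ((⌊(n:ℝ)/ε⌋₊ : ℝ) + 1) / (n:ℝ)) atTop (nhds 0) := by
  have hA : Tendsto (fun n : ℕ => Real.log ((n:ℝ)+1) / ((n:ℝ)+1)) atTop (nhds 0) := by
    have h1 : Tendsto (fun x : ℝ => Real.log x / x) atTop (nhds 0) := by
      simpa [Function.comp, id] using Real.isLittleO_log_id_atTop.tendsto_div_nhds_zero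
    have h2 : Tendsto (fun n : ℕ => (n:ℝ) + 1) atTop atTop :=
      tendsto_atTop_add_const_right atTop 1 tendsto_natCast_atTop_atTop
    exact h1.comp h2
  have hB : Tendsto (fun n : ℕ => Real.log ((n:ℝ)+1) / (n:ℝ)) atTop (nhds 0) := by
    refine squeeze_zero' (g := fun n : ℕ => 2 * (Real.log ((n:ℝ)+1) / ((n:ℝ)+1))) ?_ ?_ ?_
    · filter_upwards with n
      have h1 : (1:ℝ) ≤ (n:ℝ) + 1 := by linarith [Nat.cast_nonneg (α := ℝ) n]
      exact div_nonneg (Real.log_nonneg h1) (Nat.cast_nonneg n)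
    · filter_upwards [eventually_ge_atTop 1] with n hn
      have hn' : (1:ℝ) ≤ (n:ℝ) := by exact_mod_cast hn
      have hlog : 0 ≤ Real.log ((n:ℝ)+1) := Real.log_nonneg (by linarith)
      rw [mul_div_assoc' 2, div_le_div_iff₀ (by linarith) (by linarith)]
      nlinarith
    · simpa using hA.const_mul 2
  set c : ℝ := 1/ε + 1 with hc
  have hcpos : 0 < c := by positivity
  refine squeeze_zero' (g := fun n : ℕ => Real.log c / (n:ℝ) + Real.log ((n:ℝ)+1) / (n:ℝ))
    ?_ ?_ ?_
  · filter_upwards with n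
    have h1 : (1:ℝ) ≤ (⌊(n:ℝ)/ε⌋₊ : ℝ) + 1 := by
      linarith [Nat.cast_nonneg (α := ℝ) ⌊(n:ℝ)/ε⌋₊]
    exact div_nonneg (Real.log_nonneg h1) (Nat.cast_nonneg n)
  · filter_upwards [eventually_ge_atTop 1] with n hn
    have hn' : (1:ℝ) ≤ (n:ℝ) := by exact_mod_cast hn
    have hfl : (⌊(n:ℝ)/ε⌋₊ : ℝ) ≤ (n:ℝ)/ε := Nat.floor_le (by positivity)
    have harg : (⌊(n:ℝ)/ε⌋₊ : ℝ) + 1 ≤ c * ((n:ℝ)+1) := by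
      rw [hc]
      have h01 : (n:ℝ)/ε = (1/ε) * (n:ℝ) := by rw [one_div, inv_mul_eq_div]
      have h02 : 0 < 1/ε := by positivity
      nlinarith
    have hpos : (0:ℝ) < (⌊(n:ℝ)/ε⌋₊ : ℝ) + 1 := by positivity
    have hlog : Real.log ((⌊(n:ℝ)/ε⌋₊ : ℝ) + 1) ≤ Real.log c + Real.log ((n:ℝ)+1) := by
      rw [← Real.log_mul (by positivity) (by positivity)]
      exact Real.log_le_log hpos harg
    rw [← add_div]
    gcongr
  · have h1 : Tendsto (fun n : ℕ => Real.log c / (n:ℝ)) atTop (nhds 0) :=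
      tendsto_const_div_atTop_nhds_zero_nat _
    simpa using h1.add hB

end Aux8
section Aux9
open Dynamics UniformSpace Filter Uniformity

lemma entE_WK_le {fs : Fin 3 → ℝ → ℝ} (h : GoodFib fs) (F : Set XSp) (K : ℕ) {ε : ℝ}
    (hε : 0 < ε) :
    coverEntropyEntourage (Gmap fs) F (WK K ε) ≤ (Real.log 3 : EReal) := by
  set N : ℕ → ℕ := fun n => 3 ^ (n + 2*K + 1) * (⌊(n:ℝ)/ε⌋₊ + 1) with hN
  set r : ℕ → ℝ := fun n =>
    Real.log 3 + ((2*K+1) * Real.log 3) / (n:ℝ) +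
      Real.log ((⌊(n:ℝ)/ε⌋₊ : ℝ) + 1) / (n:ℝ) with hr
  have hrt : Tendsto r atTop (nhds (Real.log 3)) := by
    have h1 : Tendsto (fun n : ℕ => ((2*K+1) * Real.log 3) / (n:ℝ)) atTop (nhds 0) :=
      tendsto_const_div_atTop_nhds_zero_nat _
    have h2 := log_floor_div_tendsto hε
    have := (tendsto_const_nhds (x := Real.log 3) (f := atTop (α := ℕ))).add h1 |>.add h2
    simpa using this
  have hterm : ∀ᶠ n : ℕ in atTop,
      ENNReal.log (coverMincard (Gmap fs) F (WK K ε) n) / (n : EReal) ≤ ((r n : ℝ) : EReal) := by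
    filter_upwards [eventually_ge_atTop 1] with n hn
    have hn' : (1:ℝ) ≤ (n:ℝ) := by exact_mod_cast hn
    have hNpos : 0 < N n := by positivity
    have h1 : ENNReal.log (coverMincard (Gmap fs) F (WK K ε) n) ≤
        ENNReal.log (((N n : ℕ∞) : ENNReal)) :=
      ENNReal.log_monotone (ENat.toENNReal_mono (mincard_le_WK h F K n hε))
    have h2 : ENNReal.log (((N n : ℕ∞) : ENNReal)) = ((Real.log (N n) : ℝ) : EReal) := by
      have hcast : ((N n : ℕ∞) : ENNReal) = ((N n : ℕ) : ENNReal) := by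
        exact_mod_cast rfl
      rw [hcast, ENNReal.log_pos_real' (by exact_mod_cast hNpos)]
      norm_num
    have h3 : Real.log (N n) / (n:ℝ) = r n := by
      rw [hN, hr]
      simp only
      push_cast
      rw [Real.log_mul (by positivity) (by positivity), Real.log_pow]
      push_cast
      field_simp
      ring
    calc ENNReal.log (coverMincard (Gmap fs) F (WK K ε) n) / (n : EReal)
        ≤ ENNReal.log (((N n : ℕ∞) : ENNReal)) / (n : EReal) :=
          EReal.monotone_div_right_of_nonneg (Nat.cast_nonneg' n) h1
      _ = ((r n : ℝ) : EReal) := by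
          rw [h2]
          rw [show (n : EReal) = (((n:ℝ)) : EReal) by norm_cast, ← EReal.coe_div, h3]
  calc coverEntropyEntourage (Gmap fs) F (WK K ε)
      ≤ Filter.limsup (fun n : ℕ => ((r n : ℝ) : EReal)) atTop := limsup_le_limsup hterm
    _ = (Real.log 3 : EReal) := (EReal.tendsto_coe.2 hrt).limsup_eq

end Aux9
section Aux10
open Dynamics UniformSpace Filter Uniformity

lemma exists_WK_subset {U : Set (XSp × XSp)} (hU : U ∈ 𝓤 XSp) :
    ∃ (K : ℕ) (ε : ℝ), 0 < ε ∧ WK K ε ⊆ U := by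
  rw [uniformity_prod_eq_comap_prod, Filter.mem_comap] at hU
  obtain ⟨S, hS, hSU⟩ := hU
  rw [Filter.mem_prod_iff] at hS
  obtain ⟨A, hA, B, hB, hAB⟩ := hS
  have hpi : 𝓤 Sig3 = ⨅ i : ℤ, Filter.comap (fun ab : Sig3 × Sig3 => (ab.1 i, ab.2 i))
      (𝓤 (Fin 3)) := Pi.uniformity _
  rw [hpi, Filter.mem_iInf'] at hA
  obtain ⟨J, hJfin, V, hV, hVuniv, hAeq, -⟩ := hA
  obtain ⟨ε, hε, hB'⟩ := Metric.mem_uniformity_dist.1 hB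
  set K : ℕ := hJfin.toFinset.sup Int.natAbs with hK
  refine ⟨K, ε, hε, fun pq hpq => ?_⟩
  obtain ⟨hpq1, hpq2⟩ := hpq
  apply hSU
  rw [Set.mem_preimage]
  apply hAB
  constructor
  · rw [hAeq]
    simp only [Set.mem_iInter]
    intro i hi
    have hiK : |i| ≤ (K : ℤ) := by
      have h1 : i.natAbs ≤ K := Finset.le_sup (hJfin.mem_toFinset.2 hi)
      rw [Int.abs_eq_natAbs]
      exact_mod_cast h1
    have heq : pq.1.1 i = pq.2.1 i := hpq1 i hiK
    have := hV i
    rw [bot_uniformity, Filter.mem_comap] at this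
    obtain ⟨t, ht, htV⟩ := this
    apply htV
    rw [Set.mem_preimage]
    have hid : ((pq.1.1 i, pq.2.1 i) : Fin 3 × Fin 3) ∈ SetRel.id := by
      rw [SetRel.mem_id]
      exact heq
    exact Filter.mem_principal.1 ht hid
  · apply hB'
    rw [Subtype.dist_eq, Real.dist_eq]
    exact hpq2

lemma upper_bound {fs : Fin 3 → ℝ → ℝ} (h : GoodFib fs) :
    coverEntropy (Gmap fs) (LamG fs) ≤ (Real.log 3 : EReal) := by
  rw [coverEntropy]
  refine iSup₂_le fun U hU => ?_
  obtain ⟨K, ε, hε, hsub⟩ := exists_WK_subset hU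
  exact (coverEntropyEntourage_antitone (Gmap fs) (LamG fs) hsub).trans
    (entE_WK_le h (LamG fs) K hε)

end Aux10

/-- the topological (cover) entropy of `G` restricted to `Λ_G` is `log 3`. -/
theorem stmt10 (f₀ f₁ f₂ : ℝ → ℝ) (β₀ lam₀ γ β₂ : ℝ)
    (h0 : F0cond f₀ β₀ lam₀) (h1 : F1cond f₁ γ lam₀) (h2 : F2cond f₂ β₂ lam₀) :
    Dynamics.coverEntropy (Gmap ![f₀, f₁, f₂]) (LamG ![f₀, f₁, f₂])
      = (Real.log 3 : EReal) := by
  have hg := goodFib_of_conds h0 h1 h2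
  exact le_antisymm (upper_bound hg) (lower_bound hg)

end
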